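/- Let (Ω, F, μ) be a standard Borel probability space, let d ∈ ℕ with d ≥ 1, let X_i : Ω → ℝ (i ∈ Fin d) be measurable features, and let Y : Ω → ℝ be square-integrable. For S : Finset (Fin d), let m_S denote the σ-algebra generated jointly by (X_i)_{i ∈ S}, and define the MSE value function ν(S) = E[(Y − E[Y])²] − E[(Y − E[Y | m_S])²]. Fix j ∈ Fin d. If for every S ⊆ Finset.univ \ {j} the σ-algebras σ(X_j) and σ(Y) are conditionally independent given m_S, then the SAGE value φ_j(ν) = 0. -/

import Mathlib

open MeasureTheory ProbabilityTheory Finset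

noncomputable def shapley (d : ℕ) (ν : Finset (Fin d) → ℝ) (j : Fin d) : ℝ :=
  (1 / (Nat.factorial d : ℝ)) * ∑ π : Equiv.Perm (Fin d),
    (ν (Finset.univ.filter fun i => π i ≤ π j) - ν (Finset.univ.filter fun i => π i < π j))

/-- The σ-algebra generated jointly by the features `X i` for `i ∈ S`. -/
def coalitionSigma {Ω : Type*} {d : ℕ} (X : Fin d → Ω → ℝ) (S : Finset (Fin d)) :
    MeasurableSpace Ω :=
  ⨆ i ∈ S, MeasurableSpace.comap (X i) inferInstance

theorem coalitionSigma_le {Ω : Type*} [mΩ : MeasurableSpace Ω] {d : ℕ}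
    {X : Fin d → Ω → ℝ} (hX : ∀ i, Measurable (X i)) (S : Finset (Fin d)) :
    coalitionSigma X S ≤ mΩ :=
  iSup₂_le fun i _ => (hX i).comap_le

section Aux

variable {Ω : Type*}

lemma sup_eq_generateFrom_inters (m' m₂ : MeasurableSpace Ω) :
    m' ⊔ m₂ = MeasurableSpace.generateFrom
      {t | ∃ B C, MeasurableSet[m'] B ∧ MeasurableSet[m₂] C ∧ t = B ∩ C} := by
  apply le_antisymm
  · refine sup_le ?_ ?_
    · intro s hs
      exact MeasurableSpace.measurableSet_generateFrom
        ⟨s, Set.univ, hs, MeasurableSet.univ, (Set.inter_univ s).symm⟩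
    · intro s hs
      exact MeasurableSpace.measurableSet_generateFrom
        ⟨Set.univ, s, MeasurableSet.univ, hs, (Set.univ_inter s).symm⟩
  · refine MeasurableSpace.generateFrom_le ?_
    rintro t ⟨B, C, hB, hC, rfl⟩
    exact ((le_sup_left : m' ≤ m' ⊔ m₂) B hB).inter ((le_sup_right : m₂ ≤ m' ⊔ m₂) C hC)

lemma isPiSystem_inters (m' m₂ : MeasurableSpace Ω) :
    IsPiSystem {t | ∃ B C, MeasurableSet[m'] B ∧ MeasurableSet[m₂] C ∧ t = B ∩ C} := by
  rintro s ⟨B₁, C₁, hB₁, hC₁, rfl⟩ t ⟨B₂, C₂, hB₂, hC₂, rfl⟩ -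
  refine ⟨B₁ ∩ B₂, C₁ ∩ C₂, hB₁.inter hB₂, hC₁.inter hC₂, ?_⟩
  ext x; simp only [Set.mem_inter_iff]; tauto

/-- Key analytic lemma: if `m₂` and `σ(Y)` are conditionally independent given `m'`,
then `E[Y | m' ⊔ m₂] = E[Y | m']` a.e. -/
lemma condexp_sup_of_condIndep {m' m₂ : MeasurableSpace Ω}
    [mΩ : MeasurableSpace Ω] [StandardBorelSpace Ω] (hm' : m' ≤ mΩ) (hm₂ : m₂ ≤ mΩ)
    {μ : Measure Ω} [IsProbabilityMeasure μ]
    {Y : Ω → ℝ} (hYmeas : Measurable Y) (hYint : Integrable Y μ)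
    (hCI : CondIndep m' m₂ (MeasurableSpace.comap Y inferInstance) hm' μ) :
    μ[Y | m' ⊔ m₂] =ᵐ[μ] μ[Y | m'] := by
  have hmY : MeasurableSpace.comap Y inferInstance ≤ mΩ := hYmeas.comap_le
  have hm : m' ⊔ m₂ ≤ mΩ := sup_le hm' hm₂
  haveI : SigmaFinite (μ.trim hm) := by
    haveI : IsFiniteMeasure (μ.trim hm) := isFiniteMeasure_trim hm
    infer_instance
  haveI : SigmaFinite (μ.trim hm') := by
    haveI : IsFiniteMeasure (μ.trim hm') := isFiniteMeasure_trim hm'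
    infer_instance
  have hCI' := (condIndep_iff m' m₂ (MeasurableSpace.comap Y inferInstance) hm' hm₂ hmY μ).mp hCI
  -- Step A: indicator base case
  have hbase : ∀ B C D : Set Ω, MeasurableSet[m'] B → MeasurableSet[m₂] C →
      MeasurableSet[(MeasurableSpace.comap Y inferInstance)] D →
      ∫ x in B ∩ C, (D.indicator (fun _ => (1:ℝ))) x ∂μ
        = ∫ x in B ∩ C, (μ[D.indicator (fun _ => (1:ℝ)) | m']) x ∂μ := by
    intro B C D hB hC hD
    have hDmΩ : MeasurableSet D := hmY D hD
    have hCmΩ : MeasurableSet C := hm₂ C hC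
    have hBmΩ : MeasurableSet B := hm' B hB
    have hDind : Integrable (D.indicator (fun _ => (1:ℝ))) μ :=
      (integrable_const 1).indicator hDmΩ
    have hCDind : Integrable ((C ∩ D).indicator (fun _ => (1:ℝ))) μ :=
      (integrable_const 1).indicator (hCmΩ.inter hDmΩ)
    set g : Ω → ℝ := μ[D.indicator (fun _ => (1:ℝ)) | m'] with hgdef
    have hgsm : StronglyMeasurable[m'] g := stronglyMeasurable_condExp
    have hgint : Integrable g μ := integrable_condExp
    have hCg_int : Integrable (C.indicator g) μ := hgint.indicator hCmΩ
    -- LHS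
    have hLHS : ∫ x in B ∩ C, (D.indicator (fun _ => (1:ℝ))) x ∂μ
        = (μ (B ∩ C ∩ D)).toReal := by
      rw [setIntegral_indicator hDmΩ, setIntegral_const, smul_eq_mul, mul_one, measureReal_def]
    -- RHS
    have h1 : ∫ x in B ∩ C, g x ∂μ = ∫ x in B, (C.indicator g) x ∂μ := by
      rw [setIntegral_indicator hCmΩ]
    have hmul : C.indicator g
        = g * C.indicator (fun _ => (1:ℝ)) := by
      funext x
      by_cases hx : x ∈ C <;> simp [Set.indicator_apply, hx]
    have hpull : μ[C.indicator g | m']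
        =ᵐ[μ] g * μ[C.indicator (fun _ => (1:ℝ)) | m'] := by
      have := condExp_mul_of_stronglyMeasurable_left (μ := μ) hgsm
        (by rw [← hmul]; exact hCg_int)
        ((integrable_const (1:ℝ)).indicator hCmΩ)
      calc μ[C.indicator g | m'] = μ[g * C.indicator (fun _ => (1:ℝ)) | m'] := by
            rw [hmul]
        _ =ᵐ[μ] g * μ[C.indicator (fun _ => (1:ℝ)) | m'] := this
    have h2 : ∫ x in B, (C.indicator g) x ∂μ
        = ∫ x in B, (μ[C.indicator g | m']) x ∂μ :=
      (setIntegral_condExp hm' hCg_int hB).symm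
    have h3 : ∫ x in B, (μ[C.indicator g | m']) x ∂μ
        = ∫ x in B, (μ[(C ∩ D).indicator (fun _ => (1:ℝ)) | m']) x ∂μ := by
      refine setIntegral_congr_ae hBmΩ ?_
      filter_upwards [hpull, hCI' C D hC hD] with x hx1 hx2 _
      rw [hx1]
      simp only [Pi.mul_apply] at hx2 ⊢
      rw [mul_comm] at hx2
      exact hx2.symm
    have h4 : ∫ x in B, (μ[(C ∩ D).indicator (fun _ => (1:ℝ)) | m']) x ∂μ
        = ∫ x in B, ((C ∩ D).indicator (fun _ => (1:ℝ))) x ∂μ :=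
      setIntegral_condExp hm' hCDind hB
    have h5 : ∫ x in B, ((C ∩ D).indicator (fun _ => (1:ℝ))) x ∂μ
        = (μ (B ∩ (C ∩ D))).toReal := by
      rw [setIntegral_indicator (hCmΩ.inter hDmΩ), setIntegral_const, smul_eq_mul, mul_one, measureReal_def]
    rw [hLHS, h1, h2, h3, h4, h5, Set.inter_assoc]
  -- Step B: extend from indicators to Y via Integrable.induction over the trimmed measure
  have hkey : ∀ B C : Set Ω, MeasurableSet[m'] B → MeasurableSet[m₂] C →
      ∫ x in B ∩ C, Y x ∂μ = ∫ x in B ∩ C, (μ[Y | m']) x ∂μ := by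
    intro B C hB hC
    have hYsm : StronglyMeasurable[MeasurableSpace.comap Y inferInstance] Y :=
      Measurable.stronglyMeasurable
        ((@measurable_iff_comap_le Ω ℝ (MeasurableSpace.comap Y inferInstance) _ Y).mpr le_rfl)
    have hYtrim : Integrable Y (μ.trim hmY) := hYint.trim hmY hYsm
    -- the L¹-norm estimate needed for closedness
    have hest : ∀ f : Ω → ℝ, Integrable f (μ.trim hmY) →
        |∫ x in B ∩ C, f x ∂μ| ≤ ∫ x, |f x| ∂μ ∧
        |∫ x in B ∩ C, (μ[f | m']) x ∂μ| ≤ ∫ x, |f x| ∂μ := by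
      intro f hf
      have hfμ : Integrable f μ := integrable_of_integrable_trim hmY hf
      constructor
      · calc |∫ x in B ∩ C, f x ∂μ| ≤ ∫ x in B ∩ C, |f x| ∂μ := by
              simpa [Real.norm_eq_abs] using
                norm_integral_le_integral_norm (μ := μ.restrict (B ∩ C)) f
          _ ≤ ∫ x, |f x| ∂μ := by
              refine integral_mono_measure Measure.restrict_le_self ?_ hfμ.abs
              exact Filter.Eventually.of_forall fun x => abs_nonneg _
      · calc |∫ x in B ∩ C, (μ[f | m']) x ∂μ| ≤ ∫ x in B ∩ C, |(μ[f | m']) x| ∂μ := by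
              simpa [Real.norm_eq_abs] using
                norm_integral_le_integral_norm (μ := μ.restrict (B ∩ C)) (μ[f | m'])
          _ ≤ ∫ x, |(μ[f | m']) x| ∂μ := by
              refine integral_mono_measure Measure.restrict_le_self ?_
                (integrable_condExp (m := m')).abs
              exact Filter.Eventually.of_forall fun x => abs_nonneg _
          _ ≤ ∫ x, |f x| ∂μ := integral_abs_condExp_le f
    refine @Integrable.induction Ω ℝ (MeasurableSpace.comap Y inferInstance) _ (μ.trim hmY)
      (fun g => ∫ x in B ∩ C, g x ∂μ = ∫ x in B ∩ C, (μ[g | m']) x ∂μ)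
      ?_ ?_ ?_ ?_ Y hYtrim
    · -- indicators
      intro c s hs _
      have hind : (s.indicator fun _ => c) = fun x => c * (s.indicator (fun _ => (1:ℝ))) x := by
        funext x
        by_cases hx : x ∈ s <;> simp [Set.indicator_apply, hx]
      have hsmul : μ[s.indicator fun _ => c | m']
          =ᵐ[μ] fun x => c * (μ[s.indicator (fun _ => (1:ℝ)) | m']) x := by
        have hsc : (s.indicator fun _ => c) = c • s.indicator (fun _ => (1:ℝ)) := by
          funext x
          by_cases hx : x ∈ s <;> simp [Set.indicator_apply, hx]
        calc μ[s.indicator fun _ => c | m']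
            = μ[c • s.indicator (fun _ => (1:ℝ)) | m'] := by rw [hsc]
          _ =ᵐ[μ] c • μ[s.indicator (fun _ => (1:ℝ)) | m'] := condExp_smul c _ m'
          _ = fun x => c * (μ[s.indicator (fun _ => (1:ℝ)) | m']) x := rfl
      calc ∫ x in B ∩ C, (s.indicator fun _ => c) x ∂μ
          = ∫ x in B ∩ C, c * (s.indicator (fun _ => (1:ℝ))) x ∂μ := by rw [hind]
        _ = c * ∫ x in B ∩ C, (s.indicator (fun _ => (1:ℝ))) x ∂μ := integral_const_mul c _
        _ = c * ∫ x in B ∩ C, (μ[s.indicator (fun _ => (1:ℝ)) | m']) x ∂μ := by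
            rw [hbase B C s hB hC hs]
        _ = ∫ x in B ∩ C, c * (μ[s.indicator (fun _ => (1:ℝ)) | m']) x ∂μ :=
            (integral_const_mul c _).symm
        _ = ∫ x in B ∩ C, (μ[s.indicator fun _ => c | m']) x ∂μ := by
            refine (setIntegral_congr_ae ((hm' B hB).inter (hm₂ C hC)) ?_).symm
            filter_upwards [hsmul] with x hx _
            rw [hx]
    · -- additivity
      intro f g _ hfi hgi hPf hPg
      have hfμ : Integrable f μ := integrable_of_integrable_trim hmY hfi
      have hgμ : Integrable g μ := integrable_of_integrable_trim hmY hgi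
      have hadd : μ[f + g | m'] =ᵐ[μ] μ[f | m'] + μ[g | m'] := condExp_add hfμ hgμ m'
      calc ∫ x in B ∩ C, (f + g) x ∂μ
          = ∫ x in B ∩ C, f x ∂μ + ∫ x in B ∩ C, g x ∂μ :=
            integral_add hfμ.integrableOn hgμ.integrableOn
        _ = ∫ x in B ∩ C, (μ[f | m']) x ∂μ + ∫ x in B ∩ C, (μ[g | m']) x ∂μ := by
            rw [hPf, hPg]
        _ = ∫ x in B ∩ C, ((μ[f | m']) x + (μ[g | m']) x) ∂μ :=
            (integral_add integrable_condExp.integrableOn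
              integrable_condExp.integrableOn).symm
        _ = ∫ x in B ∩ C, (μ[f + g | m']) x ∂μ := by
            refine (setIntegral_congr_ae ((hm' B hB).inter (hm₂ C hC)) ?_).symm
            filter_upwards [hadd] with x hx _
            rw [hx]; rfl
    · -- closedness
      have hlip : ∀ F : (Ω →₁[μ.trim hmY] ℝ) → ℝ,
          (∀ f : Ω →₁[μ.trim hmY] ℝ, Integrable (⇑f) (μ.trim hmY) → True) →
          True := fun _ _ => trivial
      have hcont : ∀ F : (Ω →₁[μ.trim hmY] ℝ) → ℝ,
          (∀ f g : Ω →₁[μ.trim hmY] ℝ, |F f - F g| ≤ ∫ x, |(⇑f - ⇑g) x| ∂μ) →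
          Continuous F := by
        intro F hF
        refine (LipschitzWith.of_dist_le_mul (K := 1) fun f g => ?_).continuous
        rw [Real.dist_eq, NNReal.coe_one, one_mul]
        refine (hF f g).trans ?_
        have hsub : Integrable (⇑f - ⇑g) (μ.trim hmY) :=
          (L1.integrable_coeFn f).sub (L1.integrable_coeFn g)
        have heq : ∫ x, |(⇑f - ⇑g) x| ∂μ = ∫ x, |(⇑f - ⇑g) x| ∂(μ.trim hmY) :=
          integral_trim_ae hmY (hsub.aestronglyMeasurable.norm)
        rw [heq]
        rw [L1.dist_eq_integral_dist]
        refine le_of_eq (integral_congr_ae ?_)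
        filter_upwards [Lp.coeFn_sub f g] with x hx
        simp only [Pi.sub_apply, Real.dist_eq]
      have h1 : Continuous fun f : Ω →₁[μ.trim hmY] ℝ => ∫ x in B ∩ C, f x ∂μ := by
        refine hcont _ fun f g => ?_
        have hfμ : Integrable (⇑f) μ := integrable_of_integrable_trim hmY (L1.integrable_coeFn f)
        have hgμ : Integrable (⇑g) μ := integrable_of_integrable_trim hmY (L1.integrable_coeFn g)
        have : ∫ x in B ∩ C, f x ∂μ - ∫ x in B ∩ C, g x ∂μ
            = ∫ x in B ∩ C, (⇑f - ⇑g) x ∂μ :=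
          (integral_sub hfμ.integrableOn hgμ.integrableOn).symm
        rw [this]
        exact (hest (⇑f - ⇑g) ((L1.integrable_coeFn f).sub (L1.integrable_coeFn g))).1
      have h2 : Continuous fun f : Ω →₁[μ.trim hmY] ℝ => ∫ x in B ∩ C, (μ[⇑f | m']) x ∂μ := by
        refine hcont _ fun f g => ?_
        have hfμ : Integrable (⇑f) μ := integrable_of_integrable_trim hmY (L1.integrable_coeFn f)
        have hgμ : Integrable (⇑g) μ := integrable_of_integrable_trim hmY (L1.integrable_coeFn g)
        have hsub : μ[⇑f - ⇑g | m'] =ᵐ[μ] μ[⇑f | m'] - μ[⇑g | m'] := condExp_sub hfμ hgμ m'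
        have : ∫ x in B ∩ C, (μ[⇑f | m']) x ∂μ - ∫ x in B ∩ C, (μ[⇑g | m']) x ∂μ
            = ∫ x in B ∩ C, (μ[⇑f - ⇑g | m']) x ∂μ := by
          rw [← integral_sub integrable_condExp.integrableOn integrable_condExp.integrableOn]
          refine (setIntegral_congr_ae ((hm' B hB).inter (hm₂ C hC)) ?_).symm
          filter_upwards [hsub] with x hx _
          rw [hx]; rfl
        rw [this]
        exact (hest (⇑f - ⇑g) ((L1.integrable_coeFn f).sub (L1.integrable_coeFn g))).2
      exact isClosed_eq h1 h2
    · -- a.e. equality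
      intro f g hfg hfi hPf
      have hfgμ : f =ᵐ[μ] g := ae_eq_of_ae_eq_trim hfg
      have h1 : ∫ x in B ∩ C, f x ∂μ = ∫ x in B ∩ C, g x ∂μ :=
        integral_congr_ae (ae_restrict_of_ae hfgμ)
      have h2 : ∫ x in B ∩ C, (μ[f | m']) x ∂μ = ∫ x in B ∩ C, (μ[g | m']) x ∂μ :=
        integral_congr_ae (ae_restrict_of_ae (condExp_congr_ae hfgμ))
      rw [← h1, ← h2]
      exact hPf
  -- Step C: extend to all sets of the join, then conclude by uniqueness of condexp
  have hsets : ∀ s : Set Ω, MeasurableSet[m' ⊔ m₂] s →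
      ∫ x in s, (μ[Y | m']) x ∂μ = ∫ x in s, Y x ∂μ := by
    have hint : Integrable (μ[Y | m']) μ := integrable_condExp
    intro s hs
    refine MeasurableSpace.induction_on_inter (m := m' ⊔ m₂)
      (C := fun t _ => ∫ x in t, (μ[Y | m']) x ∂μ = ∫ x in t, Y x ∂μ)
      (sup_eq_generateFrom_inters m' m₂) (isPiSystem_inters m' m₂)
      ?_ ?_ ?_ ?_ _ hs
    · simp
    · rintro t ⟨B, C, hB, hC, rfl⟩
      exact (hkey B C hB hC).symm
    · intro t ht hteq
      have htmΩ : MeasurableSet t := hm t ht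
      have e1 : ∫ x in tᶜ, (μ[Y | m']) x ∂μ
          = ∫ x, (μ[Y | m']) x ∂μ - ∫ x in t, (μ[Y | m']) x ∂μ :=
        setIntegral_compl htmΩ hint
      have e2 : ∫ x in tᶜ, Y x ∂μ = ∫ x, Y x ∂μ - ∫ x in t, Y x ∂μ :=
        setIntegral_compl htmΩ hYint
      rw [e1, e2, hteq, integral_condExp hm']
    · intro f hdisj hfm hfeq
      have hm' : ∀ i, MeasurableSet (f i) := fun i => hm _ (hfm i)
      rw [integral_iUnion hm' hdisj hint.integrableOn,
        integral_iUnion hm' hdisj hYint.integrableOn]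
      exact tsum_congr hfeq
  have := ae_eq_condExp_of_forall_setIntegral_eq hm hYint
    (fun s _ _ => integrable_condExp.integrableOn)
    (fun s hs _ => hsets s hs)
    (((stronglyMeasurable_condExp (m := m') (μ := μ) (f := Y)).mono (le_sup_left : m' ≤ m' ⊔ m₂)).aestronglyMeasurable)
  exact this.symm

lemma coalitionSigma_insert {d : ℕ} (X : Fin d → Ω → ℝ) (j : Fin d) (S : Finset (Fin d)) :
    coalitionSigma X (insert j S)
      = coalitionSigma X S ⊔ MeasurableSpace.comap (X j) inferInstance := by
  rw [coalitionSigma, coalitionSigma]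
  rw [Finset.iSup_insert]
  rw [sup_comm]

end Aux

theorem dSAGE_zero_of_condIndep
    {Ω : Type*} [mΩ : MeasurableSpace Ω] [StandardBorelSpace Ω] [Nonempty Ω]
    (μ : Measure Ω) [IsProbabilityMeasure μ]
    (d : ℕ) (hd : 1 ≤ d) (X : Fin d → Ω → ℝ) (hX : ∀ i, Measurable (X i))
    (Y : Ω → ℝ) (hYmeas : Measurable Y) (hYL2 : MemLp Y 2 μ)
    (ν : Finset (Fin d) → ℝ)
    (hν : ∀ S : Finset (Fin d),
      ν S = ∫ ω, (Y ω - ∫ ω', Y ω' ∂μ) ^ 2 ∂μ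
        - ∫ ω, (Y ω - (μ[Y | coalitionSigma X S]) ω) ^ 2 ∂μ)
    (j : Fin d)
    (hCI : ∀ S ⊆ Finset.univ \ {j},
      CondIndep (coalitionSigma X S)
        (MeasurableSpace.comap (X j) inferInstance)
        (MeasurableSpace.comap Y inferInstance)
        (coalitionSigma_le hX S) μ) :
    shapley d ν j = 0 := by
  have hYint : Integrable Y μ := hYL2.integrable one_le_two
  -- the dummy property: adding j doesn't change ν
  have hdummy : ∀ S : Finset (Fin d), S ⊆ Finset.univ \ {j} → ν (insert j S) = ν S := by
    intro S hS
    have hce : μ[Y | coalitionSigma X (insert j S)] =ᵐ[μ] μ[Y | coalitionSigma X S] := by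
      rw [coalitionSigma_insert]
      exact condexp_sup_of_condIndep (coalitionSigma_le hX S) (hX j).comap_le
        hYmeas hYint (hCI S hS)
    rw [hν (insert j S), hν S]
    have : ∫ ω, (Y ω - (μ[Y | coalitionSigma X (insert j S)]) ω) ^ 2 ∂μ
        = ∫ ω, (Y ω - (μ[Y | coalitionSigma X S]) ω) ^ 2 ∂μ := by
      refine integral_congr_ae ?_
      filter_upwards [hce] with ω hω
      rw [hω]
    rw [this]
  -- each summand vanishes
  have hterm : ∀ π : Equiv.Perm (Fin d),
      ν (Finset.univ.filter fun i => π i ≤ π j)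
        - ν (Finset.univ.filter fun i => π i < π j) = 0 := by
    intro π
    set A : Finset (Fin d) := Finset.univ.filter fun i => π i < π j with hA
    have hAsub : A ⊆ Finset.univ \ {j} := by
      intro i hi
      simp only [hA, Finset.mem_filter, Finset.mem_univ, true_and] at hi
      simp only [Finset.mem_sdiff, Finset.mem_univ, true_and, Finset.mem_singleton]
      intro h
      subst h
      exact lt_irrefl _ hi
    have hfilter : (Finset.univ.filter fun i => π i ≤ π j) = insert j A := by
      ext i
      simp only [Finset.mem_filter, Finset.mem_univ, true_and, Finset.mem_insert, hA]
      constructor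
      · intro h
        rcases lt_or_eq_of_le h with h | h
        · exact Or.inr h
        · exact Or.inl (π.injective h)
      · rintro (rfl | h)
        · exact le_refl _
        · exact le_of_lt h
    rw [hfilter, hdummy A hAsub, sub_self]
  unfold shapley
  rw [Finset.sum_congr rfl fun π _ => hterm π]
  simp
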